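/- There exists a universal constant C > 0 such that the following holds. Let n ≥ 2, let Q be an n × n real matrix with nonnegative entries, let δ ∈ (0, 1] and 0 < m ≤ n be real numbers, and suppose that ‖Q‖ ≤ 1 − δm/n and that for every natural number t and all indices s, x one has (Qᵗ)_{s,x} ≤ 1/n + (1−δ)ᵗ. Then for every index s: Σ_{t≥0} (t+1) (Qᵗ)_{s,s} ≤ (C/δ²) ( 1 + n/m² ). (This is the matrix form of the escape-time bound ET_s ∈ O(1 + n/m²) on expanders, since d R_s ET_s = Σ_t (t+1)(Qᵗ)_{s,s} for a d-regular graph.) -/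

import Mathlib

open scoped BigOperators

/-- Sum of `(t+1) ρ^t` for `0 ≤ ρ < 1`. -/
lemma hasSum_succ_mul_geom {ρ : ℝ} (h0 : 0 ≤ ρ) (h1 : ρ < 1) :
    HasSum (fun t : ℕ => ((t : ℝ) + 1) * ρ ^ t) (1 / (1 - ρ) ^ 2) := by
  have hρ : ‖ρ‖ < 1 := by rwa [Real.norm_eq_abs, abs_of_nonneg h0]
  have h2 := (hasSum_coe_mul_geometric_of_norm_lt_one (𝕜 := ℝ) hρ).add
    (hasSum_geometric_of_lt_one h0 h1)
  have hne : (1 : ℝ) - ρ ≠ 0 := by linarith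
  have : (fun t : ℕ => (t : ℝ) * ρ ^ t + ρ ^ t) = fun t : ℕ => ((t : ℝ) + 1) * ρ ^ t := by
    funext t; ring
  rw [this] at h2
  convert h2 using 1
  · rfl
  field_simp
  ring

/-- Entries of powers of an entrywise-nonnegative matrix are nonnegative. -/
lemma pow_entry_nonneg {n : ℕ} (Q : Matrix (Fin n) (Fin n) ℝ)
    (hQ : ∀ i j, 0 ≤ Q i j) (t : ℕ) : ∀ i j, 0 ≤ (Q ^ t) i j := by
  induction t with
  | zero =>
    intro i j
    by_cases h : i = j <;> simp [pow_zero, Matrix.one_apply, h]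
  | succ t ih =>
    intro i j
    rw [pow_succ, Matrix.mul_apply]
    exact Finset.sum_nonneg fun k _ => mul_nonneg (ih i k) (hQ k j)

/-- Iterated operator norm bound. -/
lemma pow_norm_bound {n : ℕ} (Q : Matrix (Fin n) (Fin n) ℝ) {r : ℝ} (hr : 0 ≤ r)
    (h : ∀ x : Fin n → ℝ,
      Real.sqrt (∑ i, (Q.mulVec x) i ^ 2) ≤ r * Real.sqrt (∑ i, x i ^ 2)) (t : ℕ) :
    ∀ x : Fin n → ℝ,
      Real.sqrt (∑ i, ((Q ^ t).mulVec x) i ^ 2) ≤ r ^ t * Real.sqrt (∑ i, x i ^ 2) := by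
  induction t with
  | zero => intro x; simp [Matrix.one_mulVec]
  | succ t ih =>
    intro x
    have key : (Q ^ (t + 1)).mulVec x = Q.mulVec ((Q ^ t).mulVec x) := by
      rw [Matrix.mulVec_mulVec, ← pow_succ']
    rw [key]
    calc Real.sqrt (∑ i, (Q.mulVec ((Q ^ t).mulVec x)) i ^ 2)
        ≤ r * Real.sqrt (∑ i, ((Q ^ t).mulVec x) i ^ 2) := h _
      _ ≤ r * (r ^ t * Real.sqrt (∑ i, x i ^ 2)) := by
          exact mul_le_mul_of_nonneg_left (ih x) hr
      _ = r ^ (t + 1) * Real.sqrt (∑ i, x i ^ 2) := by ring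

set_option maxHeartbeats 1600000

/-- Escape-time bound on expanders, in matrix form: there is a universal constant
`C > 0` such that for any nonnegative `Q` with `‖Q‖ ≤ 1 − δm/n` and
`(Qᵗ)_{s,x} ≤ 1/n + (1−δ)ᵗ`, one has
`Σ_{t≥0} (t+1)(Qᵗ)_{s,s} ≤ (C/δ²)(1 + n/m²)`. -/
theorem stmt19 :
    ∃ C : ℝ, 0 < C ∧
      ∀ (n : ℕ), 2 ≤ n →
      ∀ Q : Matrix (Fin n) (Fin n) ℝ,
        (∀ i j, 0 ≤ Q i j) →
        ∀ δ m : ℝ, 0 < δ → δ ≤ 1 → 0 < m → m ≤ n →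
        (∀ x : Fin n → ℝ,
          Real.sqrt (∑ i, (Q.mulVec x) i ^ 2) ≤
            (1 - δ * m / n) * Real.sqrt (∑ i, x i ^ 2)) →
        (∀ (t : ℕ) (s x : Fin n), (Q ^ t) s x ≤ 1 / n + (1 - δ) ^ t) →
        ∀ s : Fin n,
          ∑' t : ℕ, ((t : ℝ) + 1) * (Q ^ t) s s ≤ C / δ ^ 2 * (1 + n / m ^ 2) := by
  refine ⟨100, by norm_num, ?_⟩
  intro n hn Q hQ0 δ m hδ0 hδ1 hm0 hmn hnorm hent s
  have hn0 : (0 : ℝ) < n := by positivity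
  have hn1 : (2 : ℝ) ≤ n := by exact_mod_cast hn
  set r : ℝ := 1 - δ * m / n with hr_def
  have hr0 : 0 ≤ r := by
    have h2 : δ * m / n ≤ 1 := by
      rw [div_le_one hn0]; nlinarith
    rw [hr_def]; linarith
  have hr1 : r < 1 := by
    have : 0 < δ * m / n := by positivity
    simp only [hr_def]; linarith
  have h1r : 1 - r = δ * m / n := by simp [hr_def]
  have h1r0 : 0 < 1 - r := by rw [h1r]; positivity
  set θ : ℝ := 1 - δ with hθ_def
  have hθ0 : 0 ≤ θ := by simp [hθ_def]; linarith
  have hθ1 : θ < 1 := by simp [hθ_def]; linarith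
  -- the threshold
  obtain ⟨A, hA_def⟩ : ∃ A : ℕ, A = ⌈Real.log (n : ℝ) / δ⌉₊ := ⟨_, rfl⟩
  have hlogn0 : 0 ≤ Real.log n := Real.log_nonneg (by linarith)
  -- θ^A ≤ 1/n
  have hθA : θ ^ A ≤ 1 / n := by
    have h1 : θ ≤ Real.exp (-δ) := by
      have := Real.add_one_le_exp (-δ); simp [hθ_def]; linarith
    have h2 : θ ^ A ≤ Real.exp (-δ) ^ A := pow_le_pow_left₀ hθ0 h1 A
    have h3 : Real.exp (-δ) ^ A = Real.exp ((A : ℝ) * (-δ)) := by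
      rw [Real.exp_nat_mul]
    have h4 : Real.log n ≤ δ * A := by
      have : Real.log (n : ℝ) / δ ≤ (A : ℝ) := by
        rw [hA_def]; exact_mod_cast Nat.le_ceil (Real.log (n : ℝ) / δ)
      calc Real.log n = (Real.log n / δ) * δ := by field_simp
        _ ≤ (A : ℝ) * δ := mul_le_mul_of_nonneg_right this (le_of_lt hδ0)
        _ = δ * A := by ring
    have h5 : Real.exp ((A : ℝ) * (-δ)) ≤ Real.exp (-Real.log n) := by
      apply Real.exp_le_exp.2; linarith [h4]
    have h6 : Real.exp (-Real.log n) = 1 / n := by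
      rw [Real.exp_neg, Real.exp_log hn0]; rw [one_div]
    calc θ ^ A ≤ Real.exp (-δ) ^ A := h2
      _ = Real.exp ((A : ℝ) * (-δ)) := h3
      _ ≤ Real.exp (-Real.log n) := h5
      _ = 1 / n := h6
  -- A ≤ 3√n/δ
  have hsqrt1 : (1 : ℝ) ≤ Real.sqrt n := by
    rw [show (1 : ℝ) = Real.sqrt 1 by simp]
    exact Real.sqrt_le_sqrt (by linarith)
  have hlog_sqrt : Real.log n ≤ 2 * Real.sqrt n := by
    have h1 : Real.log (Real.sqrt n) ≤ Real.sqrt n - 1 :=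
      Real.log_le_sub_one_of_pos (by linarith)
    have h2 : Real.log (Real.sqrt n) = Real.log n / 2 := Real.log_sqrt (le_of_lt hn0)
    linarith [h2 ▸ h1]
  have hA_le : (A : ℝ) ≤ 3 * Real.sqrt n / δ := by
    have h1 : (A : ℝ) < Real.log n / δ + 1 := by
      rw [hA_def]; exact Nat.ceil_lt_add_one (by positivity)
    have h2 : Real.log n / δ ≤ 2 * Real.sqrt n / δ := by
      gcongr
    have h3 : (1 : ℝ) ≤ Real.sqrt n / δ := by
      rw [le_div_iff₀ hδ0]; linarith
    have : 2 * Real.sqrt n / δ + Real.sqrt n / δ = 3 * Real.sqrt n / δ := by ring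
    linarith
  -- entry bound on Q^A
  have hentA : ∀ i j, (Q ^ A) i j ≤ 2 / n := by
    intro i j
    calc (Q ^ A) i j ≤ 1 / n + θ ^ A := hent A i j
      _ ≤ 1 / n + 1 / n := by linarith [hθA]
      _ = 2 / n := by ring
  -- squared column/row sums of Q^A
  have hrow : (∑ x, ((Q ^ A) s x) ^ 2) ≤ 4 / n := by
    calc (∑ x, ((Q ^ A) s x) ^ 2) ≤ ∑ _x : Fin n, (2 / (n : ℝ)) ^ 2 := by
          apply Finset.sum_le_sum
          intro x _
          have h0 := pow_entry_nonneg Q hQ0 A s x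
          have h1 := hentA s x
          nlinarith
      _ = n * (2 / n) ^ 2 := by simp [Finset.sum_const, Finset.card_univ]
      _ = 4 / n := by field_simp; ring
  have hcol : (∑ x, ((Q ^ A) x s) ^ 2) ≤ 4 / n := by
    calc (∑ x, ((Q ^ A) x s) ^ 2) ≤ ∑ _x : Fin n, (2 / (n : ℝ)) ^ 2 := by
          apply Finset.sum_le_sum
          intro x _
          have h0 := pow_entry_nonneg Q hQ0 A x s
          have h1 := hentA x s
          nlinarith
      _ = n * (2 / n) ^ 2 := by simp [Finset.sum_const, Finset.card_univ]
      _ = 4 / n := by field_simp; ring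
  -- key decay bound: (Q^(A+u+A))_{ss} ≤ (4/n) r^u
  have hkey : ∀ u : ℕ, (Q ^ (u + 2 * A)) s s ≤ 4 / n * r ^ u := by
    intro u
    set v : Fin n → ℝ := fun x => (Q ^ A) x s with hv_def
    set w : Fin n → ℝ := fun x => (Q ^ A) s x with hw_def
    set g : Fin n → ℝ := (Q ^ u).mulVec v with hg_def
    have hsplit : (Q ^ (u + 2 * A)) s s = ∑ x, w x * g x := by
      have : Q ^ (u + 2 * A) = Q ^ A * (Q ^ u * Q ^ A) := by
        rw [← pow_add, ← pow_add]; ring_nf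
      rw [this, Matrix.mul_apply]
      apply Finset.sum_congr rfl
      intro x _
      simp [hg_def, hw_def, hv_def, Matrix.mulVec, Matrix.mul_apply, dotProduct]
    have hss_nonneg : 0 ≤ (Q ^ (u + 2 * A)) s s := pow_entry_nonneg Q hQ0 _ s s
    have hCS : (∑ x, w x * g x) ^ 2 ≤ (∑ x, w x ^ 2) * ∑ x, g x ^ 2 :=
      Finset.sum_mul_sq_le_sq_mul_sq Finset.univ w g
    have hCS' : (∑ x, w x * g x) ≤
        Real.sqrt (∑ x, w x ^ 2) * Real.sqrt (∑ x, g x ^ 2) := by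
      rw [← Real.sqrt_mul (Finset.sum_nonneg fun x _ => sq_nonneg _)]
      rw [show (∑ x, w x * g x) = Real.sqrt ((∑ x, w x * g x) ^ 2) by
        rw [Real.sqrt_sq (hsplit ▸ hss_nonneg)]]
      exact Real.sqrt_le_sqrt hCS
    have hgnorm : Real.sqrt (∑ x, g x ^ 2) ≤ r ^ u * Real.sqrt (4 / n) := by
      calc Real.sqrt (∑ x, g x ^ 2) ≤ r ^ u * Real.sqrt (∑ x, v x ^ 2) :=
            pow_norm_bound Q hr0 hnorm u v
        _ ≤ r ^ u * Real.sqrt (4 / n) := by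
            apply mul_le_mul_of_nonneg_left (Real.sqrt_le_sqrt hcol) (pow_nonneg hr0 u)
    have hwnorm : Real.sqrt (∑ x, w x ^ 2) ≤ Real.sqrt (4 / n) :=
      Real.sqrt_le_sqrt hrow
    calc (Q ^ (u + 2 * A)) s s = ∑ x, w x * g x := hsplit
      _ ≤ Real.sqrt (∑ x, w x ^ 2) * Real.sqrt (∑ x, g x ^ 2) := hCS'
      _ ≤ Real.sqrt (4 / n) * (r ^ u * Real.sqrt (4 / n)) := by
          apply mul_le_mul hwnorm hgnorm (Real.sqrt_nonneg _) (Real.sqrt_nonneg _)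
      _ = Real.sqrt (4 / n) * Real.sqrt (4 / n) * r ^ u := by ring
      _ = 4 / n * r ^ u := by
          rw [Real.mul_self_sqrt (by positivity)]
  -- the summand
  set f : ℕ → ℝ := fun t => ((t : ℝ) + 1) * (Q ^ t) s s with hf_def
  have hf0 : ∀ t, 0 ≤ f t := fun t =>
    mul_nonneg (by positivity) (pow_entry_nonneg Q hQ0 t s s)
  -- tail comparison function
  set g : ℕ → ℝ := fun u => 4 / (n : ℝ) * (((u : ℝ) + 1) * r ^ u)
      + 4 / (n : ℝ) * (2 * (A : ℝ)) * r ^ u with hg_def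
  have hgsum : HasSum g (4 / (n : ℝ) * (1 / (1 - r) ^ 2)
      + 4 / (n : ℝ) * (2 * (A : ℝ)) * (1 - r)⁻¹) :=
    ((hasSum_succ_mul_geom hr0 hr1).mul_left _).add
      ((hasSum_geometric_of_lt_one hr0 hr1).mul_left _)
  have hfg : ∀ u : ℕ, f (u + 2 * A) ≤ g u := by
    intro u
    have hc : (0 : ℝ) ≤ (u : ℝ) + 2 * (A : ℝ) + 1 := by positivity
    calc f (u + 2 * A) = ((u : ℝ) + 2 * (A : ℝ) + 1) * (Q ^ (u + 2 * A)) s s := by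
          simp only [hf_def]; push_cast; ring
      _ ≤ ((u : ℝ) + 2 * (A : ℝ) + 1) * (4 / n * r ^ u) :=
          mul_le_mul_of_nonneg_left (hkey u) hc
      _ = g u := by simp only [hg_def]; ring
  have hftail : Summable fun u => f (u + 2 * A) :=
    Summable.of_nonneg_of_le (fun u => hf0 _) hfg hgsum.summable
  have hfsum : Summable f := (summable_nat_add_iff (2 * A)).1 hftail
  -- head bound
  have hδ2 : (0 : ℝ) < δ ^ 2 := by positivity
  have hsub2 : ∑ t ∈ Finset.range (2 * A), ((t : ℝ) + 1) * θ ^ t ≤ 1 / δ ^ 2 := by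
    have hs := hasSum_succ_mul_geom hθ0 hθ1
    have h1θ : (1 : ℝ) - θ = δ := by simp [hθ_def]
    rw [h1θ] at hs
    exact sum_le_hasSum _ (fun t _ => by positivity) hs
  have hsub1 : ∑ t ∈ Finset.range (2 * A), ((t : ℝ) + 1) * (1 / n)
      ≤ (2 * (A : ℝ)) * (2 * (A : ℝ)) / n := by
    calc ∑ t ∈ Finset.range (2 * A), ((t : ℝ) + 1) * (1 / n)
        ≤ ∑ _t ∈ Finset.range (2 * A), (2 * (A : ℝ)) * (1 / n) := by
          apply Finset.sum_le_sum
          intro t ht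
          have h1 : t + 1 ≤ 2 * A := Finset.mem_range.1 ht
          have h2 : ((t : ℝ) + 1) ≤ 2 * (A : ℝ) := by exact_mod_cast h1
          apply mul_le_mul_of_nonneg_right h2 (by positivity)
      _ = (2 * (A : ℝ)) * (2 * (A : ℝ)) / n := by
          rw [Finset.sum_const, Finset.card_range]
          push_cast
          ring
  have hhead : ∑ t ∈ Finset.range (2 * A), f t
      ≤ (2 * (A : ℝ)) * (2 * (A : ℝ)) / n + 1 / δ ^ 2 := by
    calc ∑ t ∈ Finset.range (2 * A), f t
        ≤ ∑ t ∈ Finset.range (2 * A), (((t : ℝ) + 1) * (1 / n) + ((t : ℝ) + 1) * θ ^ t) := by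
          apply Finset.sum_le_sum
          intro t _
          have h1 := hent t s s
          have h0 : (0 : ℝ) ≤ (t : ℝ) + 1 := by positivity
          calc f t = ((t : ℝ) + 1) * (Q ^ t) s s := rfl
            _ ≤ ((t : ℝ) + 1) * (1 / n + θ ^ t) := mul_le_mul_of_nonneg_left h1 h0
            _ = ((t : ℝ) + 1) * (1 / n) + ((t : ℝ) + 1) * θ ^ t := by ring
      _ = (∑ t ∈ Finset.range (2 * A), ((t : ℝ) + 1) * (1 / n))
          + ∑ t ∈ Finset.range (2 * A), ((t : ℝ) + 1) * θ ^ t := Finset.sum_add_distrib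
      _ ≤ (2 * (A : ℝ)) * (2 * (A : ℝ)) / n + 1 / δ ^ 2 := add_le_add hsub1 hsub2
  -- head numeric bound
  have hheadnum : (2 * (A : ℝ)) * (2 * (A : ℝ)) / n ≤ 36 / δ ^ 2 := by
    have h1 : (A : ℝ) * δ ≤ 3 * Real.sqrt n := (le_div_iff₀ hδ0).1 hA_le
    have hSQ : Real.sqrt n ^ 2 = n := Real.sq_sqrt (le_of_lt hn0)
    have hA0 : (0 : ℝ) ≤ (A : ℝ) := by positivity
    have h2 : ((A : ℝ) * δ) ^ 2 ≤ (3 * Real.sqrt n) ^ 2 :=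
      pow_le_pow_left₀ (mul_nonneg hA0 (le_of_lt hδ0)) h1 2
    have h3 : ((A : ℝ) * δ) ^ 2 ≤ 9 * n := by
      calc ((A : ℝ) * δ) ^ 2 ≤ (3 * Real.sqrt n) ^ 2 := h2
        _ = 9 * n := by rw [mul_pow, hSQ]; norm_num
    rw [div_le_div_iff₀ hn0 hδ2]
    calc 2 * (A : ℝ) * (2 * (A : ℝ)) * δ ^ 2 = 4 * (((A : ℝ) * δ) ^ 2) := by ring
      _ ≤ 4 * (9 * (n : ℝ)) := mul_le_mul_of_nonneg_left h3 (by norm_num)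
      _ = 36 * (n : ℝ) := by ring
  -- tail numeric bound
  have hSQ : Real.sqrt n ^ 2 = n := Real.sq_sqrt (le_of_lt hn0)
  have hmne : m ≠ 0 := ne_of_gt hm0
  have hδne : δ ≠ 0 := ne_of_gt hδ0
  have hnne : (n : ℝ) ≠ 0 := ne_of_gt hn0
  have htail1 : 4 / (n : ℝ) * (1 / (1 - r) ^ 2) = 4 * n / (δ ^ 2 * m ^ 2) := by
    rw [h1r]; field_simp
  have htail2 : 4 / (n : ℝ) * (2 * (A : ℝ)) * (1 - r)⁻¹
      ≤ 24 * Real.sqrt n / (δ ^ 2 * m) := by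
    have he : 4 / (n : ℝ) * (2 * (A : ℝ)) * (1 - r)⁻¹ = 8 * (A : ℝ) / (δ * m) := by
      rw [h1r]; field_simp; ring
    rw [he]
    have h2 : 8 * (A : ℝ) / (δ * m) ≤ 8 * (3 * Real.sqrt n / δ) / (δ * m) := by
      gcongr
    calc 8 * (A : ℝ) / (δ * m) ≤ 8 * (3 * Real.sqrt n / δ) / (δ * m) := h2
      _ = 24 * Real.sqrt n / (δ ^ 2 * m) := by field_simp; ring
  have hAMGM : 24 * Real.sqrt n / (δ ^ 2 * m) ≤ 12 / δ ^ 2 + 12 * n / (δ ^ 2 * m ^ 2) := by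
    have hq : 2 * Real.sqrt n * m ≤ n + m ^ 2 := by
      have hsq := sq_nonneg (Real.sqrt n - m)
      rw [sub_sq, hSQ] at hsq
      linarith only [hsq]
    have he1 : 24 * Real.sqrt n / (δ ^ 2 * m)
        = 12 * (2 * Real.sqrt n * m) / (δ ^ 2 * m ^ 2) := by
      field_simp; ring
    have he2 : 12 * ((n : ℝ) + m ^ 2) / (δ ^ 2 * m ^ 2)
        = 12 / δ ^ 2 + 12 * n / (δ ^ 2 * m ^ 2) := by
      field_simp; ring
    rw [he1, ← he2]
    gcongr
  -- tail tsum bound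
  have htail : ∑' u : ℕ, f (u + 2 * A)
      ≤ 4 / (n : ℝ) * (1 / (1 - r) ^ 2) + 4 / (n : ℝ) * (2 * (A : ℝ)) * (1 - r)⁻¹ := by
    calc ∑' u : ℕ, f (u + 2 * A) ≤ ∑' u : ℕ, g u := Summable.tsum_le_tsum hfg hftail hgsum.summable
      _ = _ := hgsum.tsum_eq
  -- put everything together
  have hsplit2 : ∑' t : ℕ, f t
      = (∑ t ∈ Finset.range (2 * A), f t) + ∑' u : ℕ, f (u + 2 * A) :=
    (Summable.sum_add_tsum_nat_add (2 * A) hfsum).symm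
  rw [hsplit2]
  have hB1 : (1 : ℝ) ≤ 1 + (n : ℝ) / m ^ 2 := by
    have : (0 : ℝ) ≤ (n : ℝ) / m ^ 2 := by positivity
    linarith
  have hP1 : (0 : ℝ) ≤ 1 / δ ^ 2 := by positivity
  have hP2 : (0 : ℝ) ≤ (n : ℝ) / (δ ^ 2 * m ^ 2) := by positivity
  have hexp : (100 : ℝ) / δ ^ 2 * (1 + (n : ℝ) / m ^ 2)
      = 100 / δ ^ 2 + 100 * n / (δ ^ 2 * m ^ 2) := by
    rw [mul_add, mul_one, div_mul_div_comm]
  rw [hexp]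
  have h4n : (4 : ℝ) * n / (δ ^ 2 * m ^ 2) = 4 * ((n : ℝ) / (δ ^ 2 * m ^ 2)) := by ring
  have h12n : (12 : ℝ) * n / (δ ^ 2 * m ^ 2) = 12 * ((n : ℝ) / (δ ^ 2 * m ^ 2)) := by ring
  have h100n : (100 : ℝ) * n / (δ ^ 2 * m ^ 2) = 100 * ((n : ℝ) / (δ ^ 2 * m ^ 2)) := by ring
  have hfin1 : ∑ t ∈ Finset.range (2 * A), f t ≤ 36 / δ ^ 2 + 1 / δ ^ 2 := by
    calc ∑ t ∈ Finset.range (2 * A), f t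
        ≤ (2 * (A : ℝ)) * (2 * (A : ℝ)) / n + 1 / δ ^ 2 := hhead
      _ ≤ 36 / δ ^ 2 + 1 / δ ^ 2 := by linarith only [hheadnum]
  have hfin2 : ∑' u : ℕ, f (u + 2 * A)
      ≤ 4 * n / (δ ^ 2 * m ^ 2) + (12 / δ ^ 2 + 12 * n / (δ ^ 2 * m ^ 2)) := by
    calc ∑' u : ℕ, f (u + 2 * A)
        ≤ 4 / (n : ℝ) * (1 / (1 - r) ^ 2) + 4 / (n : ℝ) * (2 * (A : ℝ)) * (1 - r)⁻¹ := htail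
      _ ≤ 4 * n / (δ ^ 2 * m ^ 2) + 24 * Real.sqrt n / (δ ^ 2 * m) := by
          rw [htail1]; linarith only [htail2]
      _ ≤ 4 * n / (δ ^ 2 * m ^ 2) + (12 / δ ^ 2 + 12 * n / (δ ^ 2 * m ^ 2)) := by
          linarith only [hAMGM]
  have h36 : (36 : ℝ) / δ ^ 2 = 36 * (1 / δ ^ 2) := by ring
  have h100 : (100 : ℝ) / δ ^ 2 = 100 * (1 / δ ^ 2) := by ring
  have h12 : (12 : ℝ) / δ ^ 2 = 12 * (1 / δ ^ 2) := by ring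
  have h1d : (1 : ℝ) / δ ^ 2 = 1 * (1 / δ ^ 2) := by ring
  linarith only [hfin1, hfin2, hP1, hP2, h36, h100, h12, h1d, h4n, h12n, h100n]
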